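/- Let e, m : [0,T] × ℝ → ℝ be C¹ functions with ∂_t e + ∂_x m = 0, e ± m ≥ 0 pointwise, and ∫_ℝ e(t,y) dy = ∫_ℝ e(0,y) dy < ∞ for all t (with e(t,·) integrable). Then for every x ∈ ℝ and T > 0: ∫_0^T (e - m)(t, x+t) dt + ∫_0^T (e + m)(t, x-t) dt = ∫_{x-T}^{x+T} e(T,y) dy; in particular each of ∫_0^T (e ∓ m)(t, x±t) dt is bounded by ∫ e(0,y) dy uniformly in T. -/

import Mathlib

open MeasureTheory intervalIntegral

/-- Partial derivative in the first variable along a horizontal line. -/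
lemma aux_hasDerivAt_fst {f : ℝ × ℝ → ℝ} (hf : ContDiff ℝ 1 f) (t y : ℝ) :
    HasDerivAt (fun τ => f (τ, y)) (fderiv ℝ f (t, y) (1, 0)) t := by
  have h1 : HasFDerivAt f (fderiv ℝ f (t, y)) (t, y) :=
    (hf.differentiable one_ne_zero (t, y)).hasFDerivAt
  have h2 : HasDerivAt (fun τ : ℝ => ((τ, y) : ℝ × ℝ)) ((1 : ℝ), (0 : ℝ)) t :=
    (hasDerivAt_id t).prodMk (hasDerivAt_const t y)
  exact h1.comp_hasDerivAt t h2

/-- Partial derivative in the second variable along a vertical line. -/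
lemma aux_hasDerivAt_snd {f : ℝ × ℝ → ℝ} (hf : ContDiff ℝ 1 f) (t y : ℝ) :
    HasDerivAt (fun z => f (t, z)) (fderiv ℝ f (t, y) (0, 1)) y := by
  have h1 : HasFDerivAt f (fderiv ℝ f (t, y)) (t, y) :=
    (hf.differentiable one_ne_zero (t, y)).hasFDerivAt
  have h2 : HasDerivAt (fun z : ℝ => ((t, z) : ℝ × ℝ)) ((0 : ℝ), (1 : ℝ)) y :=
    (hasDerivAt_const y t).prodMk (hasDerivAt_id y)
  exact h1.comp_hasDerivAt y h2

lemma aux_cont_pderiv_fst {f : ℝ × ℝ → ℝ} (hf : ContDiff ℝ 1 f) :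
    Continuous fun p : ℝ × ℝ => fderiv ℝ f p (1, 0) :=
  (hf.continuous_fderiv one_ne_zero).clm_apply continuous_const

/-- Leibniz rule for `t ↦ ∫ u in 0..t, g t u`. -/
lemma aux_leibniz (g g' : ℝ → ℝ → ℝ)
    (hg : Continuous fun p : ℝ × ℝ => g p.1 p.2)
    (hg' : Continuous fun p : ℝ × ℝ => g' p.1 p.2)
    (hd : ∀ t u, HasDerivAt (fun τ => g τ u) (g' t u) t) (t₀ : ℝ) :
    HasDerivAt (fun t => ∫ u in (0:ℝ)..t, g t u)
      ((∫ u in (0:ℝ)..t₀, g' t₀ u) + g t₀ t₀) t₀ := by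
  have hgc : ∀ t : ℝ, Continuous (g t) := fun t =>
    hg.comp (continuous_const.prodMk continuous_id)
  have hgc' : ∀ t : ℝ, Continuous (g' t) := fun t =>
    hg'.comp (continuous_const.prodMk continuous_id)
  -- split the integral
  have hsplit : (fun t => ∫ u in (0:ℝ)..t, g t u)
      = fun t => (∫ u in (0:ℝ)..t₀, g t u) + ∫ u in t₀..t, g t u := by
    funext t
    exact (integral_add_adjacent_intervals ((hgc t).intervalIntegrable _ _)
      ((hgc t).intervalIntegrable _ _)).symm
  rw [hsplit]
  -- derivative of the first piece: differentiation under the integral sign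
  have H₁ : HasDerivAt (fun t => ∫ u in (0:ℝ)..t₀, g t u)
      (∫ u in (0:ℝ)..t₀, g' t₀ u) t₀ := by
    obtain ⟨C, hC⟩ := (((isCompact_closedBall t₀ 1).prod isCompact_uIcc)).exists_bound_of_continuousOn
      (hg'.continuousOn (s := Metric.closedBall t₀ 1 ×ˢ Set.uIcc (0:ℝ) t₀))
    have := intervalIntegral.hasDerivAt_integral_of_dominated_loc_of_deriv_le
      (F := fun t u => g t u) (F' := fun t u => g' t u) (x₀ := t₀) (a := (0:ℝ)) (b := t₀)
      (bound := fun _ => C) (μ := volume) (Metric.ball_mem_nhds t₀ one_pos)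
      (Filter.Eventually.of_forall fun x => (hgc x).aestronglyMeasurable)
      ((hgc t₀).intervalIntegrable _ _)
      (hgc' t₀).aestronglyMeasurable
      ?_ (intervalIntegrable_const) ?_
    · exact this.2
    · refine Filter.Eventually.of_forall fun u hu x hx => ?_
      exact hC (x, u) ⟨Metric.ball_subset_closedBall hx, Set.uIoc_subset_uIcc hu⟩
    · exact Filter.Eventually.of_forall fun u _ x _ => hd x u
  -- derivative of the second piece
  have H₂ : HasDerivAt (fun t => ∫ u in t₀..t, g t u) (g t₀ t₀) t₀ := by
    rw [hasDerivAt_iff_isLittleO, Asymptotics.isLittleO_iff]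
    intro ε hε
    obtain ⟨δ, hδpos, hδ⟩ := Metric.continuousAt_iff.mp (hg.continuousAt (x := (t₀, t₀))) ε hε
    filter_upwards [Metric.ball_mem_nhds t₀ hδpos] with t ht
    have ht' : |t - t₀| < δ := by simpa [Real.dist_eq] using ht
    have hEq : (∫ u in t₀..t, g t u) - (∫ u in t₀..t₀, g t₀ u) - (t - t₀) • g t₀ t₀
        = ∫ u in t₀..t, (g t u - g t₀ t₀) := by
      rw [intervalIntegral.integral_same, sub_zero,
        intervalIntegral.integral_sub ((hgc t).intervalIntegrable _ _)
          (intervalIntegrable_const)]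
      simp
    rw [hEq]
    have hbound : ∀ u ∈ Set.uIoc t₀ t, ‖g t u - g t₀ t₀‖ ≤ ε := by
      intro u hu
      have h1 : |u - t₀| ≤ |t - t₀| :=
        Set.abs_sub_left_of_mem_uIcc (Set.uIoc_subset_uIcc hu)
      have h2 : dist ((t, u) : ℝ × ℝ) (t₀, t₀) < δ := by
        rw [Prod.dist_eq]
        exact max_lt (by simpa [Real.dist_eq] using ht') (by
          simp only [Real.dist_eq]; exact lt_of_le_of_lt h1 ht')
      have := hδ h2
      rw [Real.dist_eq] at this
      exact le_of_lt this
    calc ‖∫ u in t₀..t, (g t u - g t₀ t₀)‖ ≤ ε * |t - t₀| :=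
          intervalIntegral.norm_integral_le_of_norm_le_const hbound
      _ = ε * ‖t - t₀‖ := by rw [Real.norm_eq_abs]
  exact H₁.add H₂

theorem stmt_17 (T : ℝ) (hT : 0 < T) (e m : ℝ → ℝ → ℝ)
    (he : ContDiff ℝ 1 fun p : ℝ × ℝ => e p.1 p.2)
    (hm : ContDiff ℝ 1 fun p : ℝ × ℝ => m p.1 p.2)
    (hpde : ∀ t x : ℝ, deriv (fun τ => e τ x) t + deriv (fun y => m t y) x = 0)
    (hpos : ∀ t x : ℝ, 0 ≤ e t x + m t x ∧ 0 ≤ e t x - m t x)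
    (hint : ∀ t : ℝ, Integrable (e t))
    (hcons : ∀ t : ℝ, ∫ y, e t y = ∫ y, e 0 y) :
    ∀ x : ℝ,
      ((∫ t in (0:ℝ)..T, (e t (x + t) - m t (x + t))) +
          (∫ t in (0:ℝ)..T, (e t (x - t) + m t (x - t))) =
        ∫ y in (x - T)..(x + T), e T y) ∧
      ((∫ t in (0:ℝ)..T, (e t (x + t) - m t (x + t))) ≤ ∫ y, e 0 y) ∧
      ((∫ t in (0:ℝ)..T, (e t (x - t) + m t (x - t))) ≤ ∫ y, e 0 y) := by
  intro x
  set fe : ℝ × ℝ → ℝ := fun p => e p.1 p.2 with hfe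
  set fm : ℝ × ℝ → ℝ := fun p => m p.1 p.2 with hfm
  have hec : Continuous fe := he.continuous
  have hmc : Continuous fm := hm.continuous
  -- partial derivatives
  set pe : ℝ → ℝ → ℝ := fun t y => fderiv ℝ fe (t, y) (1, 0) with hpe
  set qm : ℝ → ℝ → ℝ := fun t y => fderiv ℝ fm (t, y) (0, 1) with hqm
  have hpeD : ∀ t y, HasDerivAt (fun τ => e τ y) (pe t y) t := fun t y =>
    aux_hasDerivAt_fst he t y
  have hqmD : ∀ t y, HasDerivAt (fun z => m t z) (qm t y) y := fun t y =>
    aux_hasDerivAt_snd hm t y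
  have hpeC : Continuous fun p : ℝ × ℝ => pe p.1 p.2 := aux_cont_pderiv_fst he
  have hqmC : Continuous fun p : ℝ × ℝ => qm p.1 p.2 :=
    (hm.continuous_fderiv one_ne_zero).clm_apply continuous_const
  -- PDE in terms of pe, qm
  have hpde' : ∀ t y, pe t y = -qm t y := by
    intro t y
    have h1 : deriv (fun τ => e τ y) t = pe t y := (hpeD t y).deriv
    have h2 : deriv (fun z => m t z) y = qm t y := (hqmD t y).deriv
    have := hpde t y
    rw [h1, h2] at this
    linarith
  -- set up the cone function
  set g : ℝ → ℝ → ℝ := fun t u => e t (x + u) + e t (x - u) with hg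
  set g' : ℝ → ℝ → ℝ := fun t u => pe t (x + u) + pe t (x - u) with hg'
  have hgc : Continuous fun p : ℝ × ℝ => g p.1 p.2 := by
    apply Continuous.add
    · exact hec.comp (continuous_fst.prodMk (continuous_const.add continuous_snd))
    · exact hec.comp (continuous_fst.prodMk (continuous_const.sub continuous_snd))
  have hgc' : Continuous fun p : ℝ × ℝ => g' p.1 p.2 := by
    apply Continuous.add
    · exact hpeC.comp (continuous_fst.prodMk (continuous_const.add continuous_snd))
    · exact hpeC.comp (continuous_fst.prodMk (continuous_const.sub continuous_snd))
  have hgd : ∀ t u, HasDerivAt (fun τ => g τ u) (g' t u) t := fun t u =>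
    (hpeD t (x + u)).add (hpeD t (x - u))
  set Φ : ℝ → ℝ := fun t => ∫ u in (0:ℝ)..t, g t u with hΦdef
  set D : ℝ → ℝ := fun t => (e t (x + t) - m t (x + t)) + (e t (x - t) + m t (x - t)) with hD
  -- continuity of various line restrictions
  have hqmCline : ∀ t₀ : ℝ, Continuous fun u => qm t₀ (x + u) :=
    fun t₀ => hqmC.comp (continuous_const.prodMk (continuous_const.add continuous_id))
  have hqmCline' : ∀ t₀ : ℝ, Continuous fun u => qm t₀ (x - u) :=
    fun t₀ => hqmC.comp (continuous_const.prodMk (continuous_const.sub continuous_id))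
  -- the key derivative computation
  have hΦ : ∀ t₀ : ℝ, HasDerivAt Φ (D t₀) t₀ := by
    intro t₀
    have h := aux_leibniz g g' hgc hgc' hgd t₀
    -- compute the integral of g'
    have hsum : (∫ u in (0:ℝ)..t₀, g' t₀ u)
        = (∫ u in (0:ℝ)..t₀, pe t₀ (x + u)) + ∫ u in (0:ℝ)..t₀, pe t₀ (x - u) := by
      rw [← intervalIntegral.integral_add]
      · exact ((hqmCline t₀).neg.congr (fun u => (hpde' t₀ (x + u)).symm)).intervalIntegrable _ _
      · exact ((hqmCline' t₀).neg.congr (fun u => (hpde' t₀ (x - u)).symm)).intervalIntegrable _ _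
    have hplus : (∫ u in (0:ℝ)..t₀, pe t₀ (x + u)) = -(m t₀ (x + t₀) - m t₀ x) := by
      have hftc : (∫ u in (0:ℝ)..t₀, qm t₀ (x + u)) = m t₀ (x + t₀) - m t₀ x := by
        have := intervalIntegral.integral_eq_sub_of_hasDerivAt
          (f := fun u => m t₀ (x + u)) (f' := fun u => qm t₀ (x + u))
          (a := (0:ℝ)) (b := t₀) ?_ (((hqmCline t₀)).intervalIntegrable _ _)
        · simpa using this
        · intro u _
          have h1 := (hqmD t₀ (x + u)).comp u ((hasDerivAt_id u).const_add x)
          simpa [Function.comp_def] using h1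
      have : (∫ u in (0:ℝ)..t₀, pe t₀ (x + u)) = ∫ u in (0:ℝ)..t₀, -qm t₀ (x + u) := by
        apply intervalIntegral.integral_congr
        intro u _
        exact hpde' t₀ (x + u)
      rw [this, intervalIntegral.integral_neg, hftc]
    have hminus : (∫ u in (0:ℝ)..t₀, pe t₀ (x - u)) = m t₀ (x - t₀) - m t₀ x := by
      have hftc : (∫ u in (0:ℝ)..t₀, -qm t₀ (x - u)) = m t₀ (x - t₀) - m t₀ x := by
        have := intervalIntegral.integral_eq_sub_of_hasDerivAt
          (f := fun u => m t₀ (x - u)) (f' := fun u => -qm t₀ (x - u))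
          (a := (0:ℝ)) (b := t₀) ?_ (((hqmCline' t₀).neg).intervalIntegrable _ _)
        · simpa using this
        · intro u _
          have h1 := (hqmD t₀ (x - u)).comp u ((hasDerivAt_id u).neg.const_add x)
          have h2 : HasDerivAt (fun u => x - u) (-1 : ℝ) u := by
            simpa using (hasDerivAt_id u).const_sub x
          have h3 := (hqmD t₀ (x - u)).comp u h2
          simpa [Function.comp_def] using h3
      have : (∫ u in (0:ℝ)..t₀, pe t₀ (x - u)) = ∫ u in (0:ℝ)..t₀, -qm t₀ (x - u) := by
        apply intervalIntegral.integral_congr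
        intro u _
        exact hpde' t₀ (x - u)
      rw [this, hftc]
    have hval : (∫ u in (0:ℝ)..t₀, g' t₀ u) + g t₀ t₀ = D t₀ := by
      rw [hsum, hplus, hminus]
      simp only [hg, hD]
      ring
    rw [← hval]
    exact h
  -- continuity of D and of the two integrands
  have hcont1 : Continuous fun t => e t (x + t) - m t (x + t) := by
    have h1 : Continuous fun t : ℝ => ((t, x + t) : ℝ × ℝ) :=
      continuous_id.prodMk (continuous_const.add continuous_id)
    exact (hec.comp h1).sub (hmc.comp h1)
  have hcont2 : Continuous fun t => e t (x - t) + m t (x - t) := by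
    have h1 : Continuous fun t : ℝ => ((t, x - t) : ℝ × ℝ) :=
      continuous_id.prodMk (continuous_const.sub continuous_id)
    exact (hec.comp h1).add (hmc.comp h1)
  have hDc : Continuous D := hcont1.add hcont2
  -- FTC for Φ on [0, T]
  have hFTC : (∫ t in (0:ℝ)..T, D t) = Φ T - Φ 0 :=
    intervalIntegral.integral_eq_sub_of_hasDerivAt (fun t _ => hΦ t)
      (hDc.intervalIntegrable _ _)
  have hΦ0 : Φ 0 = 0 := by simp [hΦdef]
  have hΦT : Φ T = ∫ y in (x - T)..(x + T), e T y := by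
    have hgTc : Continuous (g T) :=
      hgc.comp (continuous_const.prodMk continuous_id)
    have h1 : Continuous fun u => e T (x + u) :=
      hec.comp (continuous_const.prodMk (continuous_const.add continuous_id))
    have h2 : Continuous fun u => e T (x - u) :=
      hec.comp (continuous_const.prodMk (continuous_const.sub continuous_id))
    have hsplit : Φ T = (∫ u in (0:ℝ)..T, e T (x + u)) + ∫ u in (0:ℝ)..T, e T (x - u) := by
      simp only [hΦdef, hg]
      exact intervalIntegral.integral_add (h1.intervalIntegrable _ _)
        (h2.intervalIntegrable _ _)
    have ha : (∫ u in (0:ℝ)..T, e T (x + u)) = ∫ y in x..(x + T), e T y := by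
      simpa using intervalIntegral.integral_comp_add_left (a := (0:ℝ)) (b := T) (e T) x
    have hb : (∫ u in (0:ℝ)..T, e T (x - u)) = ∫ y in (x - T)..x, e T y := by
      simpa using intervalIntegral.integral_comp_sub_left (a := (0:ℝ)) (b := T) (e T) x
    rw [hsplit, ha, hb, add_comm]
    exact intervalIntegral.integral_add_adjacent_intervals
      (hint T).intervalIntegrable (hint T).intervalIntegrable
  -- the identity
  have hDsplit : (∫ t in (0:ℝ)..T, D t)
      = (∫ t in (0:ℝ)..T, (e t (x + t) - m t (x + t)))
        + ∫ t in (0:ℝ)..T, (e t (x - t) + m t (x - t)) := by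
    simp only [hD]
    exact intervalIntegral.integral_add (hcont1.intervalIntegrable _ _)
      (hcont2.intervalIntegrable _ _)
  have hiden : (∫ t in (0:ℝ)..T, (e t (x + t) - m t (x + t)))
      + (∫ t in (0:ℝ)..T, (e t (x - t) + m t (x - t)))
      = ∫ y in (x - T)..(x + T), e T y := by
    rw [← hDsplit, hFTC, hΦ0, hΦT, sub_zero]
  refine ⟨hiden, ?_, ?_⟩
  -- nonnegativity of the two integrals
  · have hnn : (0:ℝ) ≤ ∫ t in (0:ℝ)..T, (e t (x - t) + m t (x - t)) :=
      intervalIntegral.integral_nonneg hT.le fun t _ => (hpos t (x - t)).1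
    have hbound : (∫ y in (x - T)..(x + T), e T y) ≤ ∫ y, e 0 y := by
      rw [← hcons T, intervalIntegral.integral_of_le (by linarith)]
      exact setIntegral_le_integral (hint T) (Filter.Eventually.of_forall fun y => by
        have h1 := (hpos T y).1; have h2 := (hpos T y).2
        simp only [Pi.zero_apply]; linarith)
    linarith [hiden]
  · have hnn : (0:ℝ) ≤ ∫ t in (0:ℝ)..T, (e t (x + t) - m t (x + t)) :=
      intervalIntegral.integral_nonneg hT.le fun t _ => (hpos t (x + t)).2
    have hbound : (∫ y in (x - T)..(x + T), e T y) ≤ ∫ y, e 0 y := by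
      rw [← hcons T, intervalIntegral.integral_of_le (by linarith)]
      exact setIntegral_le_integral (hint T) (Filter.Eventually.of_forall fun y => by
        have h1 := (hpos T y).1; have h2 := (hpos T y).2
        simp only [Pi.zero_apply]; linarith)
    linarith [hiden]
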